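/- The point (t₁,t₂) = (√(5/10), √(9/10)) = (1/√2, 3/√10) is a critical point of F(t₁,t₂) = −(π³/(t₁³t₂³))·[16t₁⁴t₂⁴ − 56(t₁⁴t₂² + t₂⁴t₁²) + 9(t₁⁴ + t₂⁴) − 14t₁²t₂²], and the value there equals (128√5/3)π³. -/

import Mathlib

open Real

private lemma poly_deriv' (p q r a : ℝ) :
    HasDerivAt (fun s : ℝ => p*s^4 + q*s^2 + r) (4*p*a^3 + 2*q*a) a := by
  have h := (((hasDerivAt_pow 4 a).const_mul p).add ((hasDerivAt_pow 2 a).const_mul q)).add_const r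
  refine h.congr_deriv ?_
  push_cast
  ring

private lemma rat_deriv' (p q r c a : ℝ) (ha : a ≠ 0) (hc : c ≠ 0) :
    deriv (fun s : ℝ => (p*s^4 + q*s^2 + r)/(s^3*c)) a =
      ((4*p*a^3 + 2*q*a)*(a^3*c) - (p*a^4 + q*a^2 + r)*(3*a^2*c))/(a^3*c)^2 := by
  have hD : HasDerivAt (fun s : ℝ => s^3*c) (3*a^2*c) a := by
    simpa using (hasDerivAt_pow 3 a).mul_const c
  exact ((poly_deriv' p q r a).div hD (mul_ne_zero (pow_ne_zero 3 ha) hc)).deriv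

/-- `(t₁,t₂) = (√(5/10), √(9/10)) = (1/√2, 3/√10)` is a critical point of the energy
`F(t₁,t₂)`, with value `(128√5/3)π³`. -/
theorem stmt_4 :
    let F : ℝ → ℝ → ℝ := fun t₁ t₂ =>
      -(π^3/(t₁^3*t₂^3)) *
        (16*t₁^4*t₂^4 - 56*(t₁^4*t₂^2 + t₂^4*t₁^2) + 9*(t₁^4 + t₂^4) - 14*t₁^2*t₂^2)
    Real.sqrt (5/10) = 1/Real.sqrt 2 ∧
    Real.sqrt (9/10) = 3/Real.sqrt 10 ∧
    deriv (fun s => F s (Real.sqrt (9/10))) (Real.sqrt (5/10)) = 0 ∧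
    deriv (fun s => F (Real.sqrt (5/10)) s) (Real.sqrt (9/10)) = 0 ∧
    F (Real.sqrt (5/10)) (Real.sqrt (9/10)) = (128*Real.sqrt 5/3)*π^3 := by
  intro F
  set a := Real.sqrt (5/10) with ha_def
  set b := Real.sqrt (9/10) with hb_def
  have hapos : 0 < a := Real.sqrt_pos.mpr (by norm_num)
  have hbpos : 0 < b := Real.sqrt_pos.mpr (by norm_num)
  have h1 : a^2 = 1/2 := by rw [ha_def, Real.sq_sqrt (by norm_num : (0:ℝ) ≤ 5/10)]; norm_num
  have h2 : b^2 = 9/10 := Real.sq_sqrt (by norm_num)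
  have h3 : a^4 = 1/4 := by rw [show a^4 = (a^2)^2 by ring, h1]; norm_num
  have h4 : b^4 = 81/100 := by rw [show b^4 = (b^2)^2 by ring, h2]; norm_num
  have h5 : a^4*b^4 = 81/400 := by rw [h3, h4]; norm_num
  have h6 : a^4*b^2 = 9/40 := by rw [h3, h2]; norm_num
  have h7 : a^2*b^4 = 81/200 := by rw [h1, h4]; norm_num
  have h8 : a^2*b^2 = 9/20 := by rw [h1, h2]; norm_num
  refine ⟨?_, ?_, ?_, ?_, ?_⟩
  · rw [ha_def, show (5:ℝ)/10 = 2⁻¹ by norm_num, Real.sqrt_inv, one_div]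
  · rw [hb_def, Real.sqrt_div' 9 (by norm_num), show Real.sqrt 9 = 3 by
      rw [show (9:ℝ) = 3^2 by norm_num, Real.sqrt_sq (by norm_num)]]
  · have hfun : (fun s => F s b) = fun s : ℝ =>
        ((-(π^3)*(16*b^4-56*b^2+9))*s^4 + (π^3*(56*b^4+14*b^2))*s^2 +
          (-(π^3)*(9*b^4)))/(s^3*(b^3)) := by
      funext s
      show -(π^3/(s^3*b^3)) *
        (16*s^4*b^4 - 56*(s^4*b^2 + b^4*s^2) + 9*(s^4 + b^4) - 14*s^2*b^2) = _
      ring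
    rw [hfun, rat_deriv' _ _ _ _ _ hapos.ne' (pow_ne_zero 3 hbpos.ne'), div_eq_zero_iff]
    left
    have hK : (-(π^3)*(16*b^4-56*b^2+9))*a^4 - (π^3*(56*b^4+14*b^2))*a^2
        - 3*(-(π^3)*(9*b^4)) = 0 := by
      linear_combination (-16*π^3)*h5 + (56*π^3)*h6 + (-9*π^3)*h3 + (-56*π^3)*h7
        + (-14*π^3)*h8 + (27*π^3)*h4
    linear_combination (a^2*b^3) * hK
  · have hfun : (fun s => F a s) = fun s : ℝ =>
        ((-(π^3)*(16*a^4-56*a^2+9))*s^4 + (π^3*(56*a^4+14*a^2))*s^2 +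
          (-(π^3)*(9*a^4)))/(s^3*(a^3)) := by
      funext s
      show -(π^3/(a^3*s^3)) *
        (16*a^4*s^4 - 56*(a^4*s^2 + s^4*a^2) + 9*(a^4 + s^4) - 14*a^2*s^2) = _
      ring
    rw [hfun, rat_deriv' _ _ _ _ _ hbpos.ne' (pow_ne_zero 3 hapos.ne'), div_eq_zero_iff]
    left
    have hK : (-(π^3)*(16*a^4-56*a^2+9))*b^4 - (π^3*(56*a^4+14*a^2))*b^2
        - 3*(-(π^3)*(9*a^4)) = 0 := by
      linear_combination (-16*π^3)*h5 + (56*π^3)*h7 + (-9*π^3)*h4 + (-56*π^3)*h6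
        + (-14*π^3)*h8 + (27*π^3)*h3
    linear_combination (b^2*a^3) * hK
  · have s5 : Real.sqrt 5 * Real.sqrt 5 = 5 := Real.mul_self_sqrt (by norm_num)
    have s5pos : (0:ℝ) < Real.sqrt 5 := Real.sqrt_pos.mpr (by norm_num)
    have hab : a * b = 3/(2*Real.sqrt 5) := by
      rw [ha_def, hb_def, ← Real.sqrt_mul (by norm_num : (0:ℝ) ≤ 5/10),
        show (5:ℝ)/10 * (9/10) = 9/20 by norm_num,
        show (9:ℝ)/20 = (3/(2*Real.sqrt 5))^2 by
          rw [div_pow, mul_pow, Real.sq_sqrt (by norm_num : (0:ℝ) ≤ 5)]; norm_num,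
        Real.sqrt_sq (by positivity)]
    have hab3 : a^3*b^3 = 27/(40*Real.sqrt 5) := by
      rw [show a^3*b^3 = (a*b)^3 by ring, hab, div_pow, mul_pow,
        show Real.sqrt 5 ^ 3 = 5 * Real.sqrt 5 by rw [pow_succ, sq, s5],
        show (2:ℝ)^3*(5*Real.sqrt 5) = 40*Real.sqrt 5 by ring]
      norm_num
    have hP : 16*a^4*b^4 - 56*(a^4*b^2 + b^4*a^2) + 9*(a^4 + b^4) - 14*a^2*b^2
        = -144/5 := by
      linear_combination 16*h5 - 56*h6 - 56*h7 + 9*h3 + 9*h4 - 14*h8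
    show -(π^3/(a^3*b^3)) *
        (16*a^4*b^4 - 56*(a^4*b^2 + b^4*a^2) + 9*(a^4 + b^4) - 14*a^2*b^2)
      = (128*Real.sqrt 5/3)*π^3
    rw [hP, hab3]
    field_simp
    ring_nf
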